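/- (Concentration around the maximizer) Let f : [a_1, a_2] → ℝ be C², strictly concave with unique maximizer a* in the interior and f''(a*) < 0. Then Σ_{n = -R L^{1/4}}^{R L^{1/4}} exp( √L · f(a* + n/√L) ) ~ L^{1/4} e^{f(a*)√L} ∫_{-R}^{R} e^{f''(a*) x²/2} dx as L → ∞, for each fixed R > 0. -/

import Mathlib

open Set Filter MeasureTheory


noncomputable def MM (L : ℕ) : ℝ := (L:ℝ) ^ ((1:ℝ)/4)

noncomputable def AA (f : ℝ → ℝ) (astar : ℝ) (L : ℕ) (n : ℤ) : ℝ :=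
  Real.exp (Real.sqrt L * (f (astar + n / Real.sqrt L) - f astar))

noncomputable def FF (f : ℝ → ℝ) (astar R : ℝ) (L : ℕ) (x : ℝ) : ℝ :=
  ∑ n ∈ Finset.Icc (-(⌊R * MM L⌋)) ⌊R * MM L⌋,
    (Set.Ico ((n:ℝ)/MM L) (((n:ℝ)+1)/MM L)).indicator (fun _ => AA f astar L n) x

lemma MM_one_le {L : ℕ} (h : 1 ≤ L) : 1 ≤ MM L :=
  Real.one_le_rpow (by exact_mod_cast h) (by norm_num)

lemma MM_pos {L : ℕ} (h : 1 ≤ L) : 0 < MM L := lt_of_lt_of_le one_pos (MM_one_le h)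

lemma MM_sq (L : ℕ) : MM L ^ 2 = Real.sqrt L := by
  rw [MM, ← Real.rpow_natCast ((L:ℝ) ^ ((1:ℝ)/4)) 2, ← Real.rpow_mul (Nat.cast_nonneg L),
    Real.sqrt_eq_rpow]
  norm_num

lemma MM_top : Tendsto MM atTop atTop :=
  (tendsto_rpow_atTop (by norm_num : (0:ℝ) < 1/4)).comp tendsto_natCast_atTop_atTop

lemma mem_Ico_iff_floor {M x : ℝ} (hM : 0 < M) (n : ℤ) :
    x ∈ Set.Ico ((n:ℝ)/M) (((n:ℝ)+1)/M) ↔ ⌊x * M⌋ = n := by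
  rw [Int.floor_eq_iff]
  constructor
  · rintro ⟨h1, h2⟩
    exact ⟨(div_le_iff₀ hM).1 h1, by push_cast; exact (lt_div_iff₀ hM).1 h2⟩
  · rintro ⟨h1, h2⟩
    exact ⟨(div_le_iff₀ hM).2 h1, (lt_div_iff₀ hM).2 (by push_cast at h2 ⊢; linarith)⟩

lemma FF_eval (f : ℝ → ℝ) (astar R : ℝ) {L : ℕ} (hL : 1 ≤ L) (x : ℝ) :
    FF f astar R L x =
      if ⌊x * MM L⌋ ∈ Finset.Icc (-(⌊R * MM L⌋)) ⌊R * MM L⌋ then AA f astar L ⌊x * MM L⌋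
      else 0 := by
  have hM := MM_pos hL
  rw [FF]
  split_ifs with h
  · rw [Finset.sum_eq_single_of_mem _ h]
    · rw [Set.indicator_of_mem ((mem_Ico_iff_floor hM _).2 rfl)]
    · intro n hn hne
      rw [Set.indicator_of_notMem]
      rw [mem_Ico_iff_floor hM]
      exact fun hh => hne (hh ▸ rfl)
  · refine Finset.sum_eq_zero fun n hn => ?_
    rw [Set.indicator_of_notMem]
    rw [mem_Ico_iff_floor hM]
    exact fun hh => h (hh ▸ hn)

lemma FF_integral (f : ℝ → ℝ) (astar R : ℝ) {L : ℕ} (hL : 1 ≤ L) :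
    ∫ x, FF f astar R L x =
      (∑ n ∈ Finset.Icc (-(⌊R * MM L⌋)) ⌊R * MM L⌋, AA f astar L n) / MM L := by
  have hM := MM_pos hL
  have hint : ∀ n ∈ Finset.Icc (-(⌊R * MM L⌋)) ⌊R * MM L⌋,
      Integrable ((Set.Ico ((n:ℝ)/MM L) (((n:ℝ)+1)/MM L)).indicator
        (fun _ => AA f astar L n)) volume := by
    intro n _
    rw [integrable_indicator_iff measurableSet_Ico]
    exact integrableOn_const measure_Ico_lt_top.ne
  unfold FF
  rw [integral_finset_sum _ hint, Finset.sum_div]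
  refine Finset.sum_congr rfl fun n _ => ?_
  rw [integral_indicator_const _ measurableSet_Ico, Real.volume_real_Ico, smul_eq_mul]
  have : ((n:ℝ)+1)/MM L - (n:ℝ)/MM L = 1 / MM L := by field_simp; ring
  rw [this, max_eq_left (by positivity)]
  ring

lemma FF_meas (f : ℝ → ℝ) (astar R : ℝ) (L : ℕ) :
    AEStronglyMeasurable (FF f astar R L) volume := by
  apply Measurable.aestronglyMeasurable
  apply Finset.measurable_sum
  intro n _
  exact measurable_const.indicator measurableSet_Ico

lemma floor_div_tendsto (x : ℝ) : Tendsto (fun L => (⌊x * MM L⌋:ℝ) / MM L) atTop (nhds x) := by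
  have h0 : Tendsto (fun L => (MM L)⁻¹) atTop (nhds 0) := MM_top.inv_tendsto_atTop
  have hle : ∀ᶠ L in atTop, x - (MM L)⁻¹ ≤ (⌊x * MM L⌋:ℝ) / MM L ∧ (⌊x * MM L⌋:ℝ) / MM L ≤ x := by
    filter_upwards [eventually_ge_atTop 1] with L hL
    have hM := MM_pos hL
    constructor
    · rw [le_div_iff₀ hM, sub_mul, inv_mul_cancel₀ hM.ne']
      have := Int.sub_one_lt_floor (x * MM L)
      linarith
    · rw [div_le_iff₀ hM]
      exact Int.floor_le _
  have hlow : Tendsto (fun L => x - (MM L)⁻¹) atTop (nhds x) := by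
    simpa using tendsto_const_nhds.sub h0
  exact tendsto_of_tendsto_of_tendsto_of_le_of_le' hlow tendsto_const_nhds
    (hle.mono fun L h => h.1) (hle.mono fun L h => h.2)

lemma taylor_quot {f : ℝ → ℝ} {a : ℝ} (h1 : ∀ᶠ x in nhds a, DifferentiableAt ℝ f x)
    (h2 : DifferentiableAt ℝ (deriv f) a) (h0 : deriv f a = 0) :
    Tendsto (fun t => (f (a + t) - f a) / t ^ 2) (nhdsWithin 0 {(0:ℝ)}ᶜ)
      (nhds (deriv (deriv f) a / 2)) := by
  have hcont : Tendsto (fun t : ℝ => a + t) (nhds 0) (nhds a) := by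
    have : Continuous (fun t : ℝ => a + t) := by continuity
    have := this.tendsto 0
    simpa using this
  have hmap : Tendsto (fun t : ℝ => a + t) (nhdsWithin 0 {(0:ℝ)}ᶜ) (nhdsWithin a {a}ᶜ) := by
    rw [tendsto_nhdsWithin_iff]
    refine ⟨hcont.mono_left nhdsWithin_le_nhds, ?_⟩
    filter_upwards [self_mem_nhdsWithin] with t ht
    simpa using ht
  apply deriv.lhopital_zero_nhdsNE
  · filter_upwards [hcont.mono_left nhdsWithin_le_nhds |>.eventually h1] with t ht
    exact (DifferentiableAt.comp t ht ((differentiableAt_id.const_add a))).sub_const _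
  · filter_upwards [self_mem_nhdsWithin] with t ht
    have ht' : (t:ℝ) ≠ 0 := by simpa using ht
    simp [deriv_pow, ht']
  · have hfc : ContinuousAt f a := (h1.self_of_nhds).continuousAt
    have : Tendsto (fun t : ℝ => f (a + t) - f a) (nhds (0:ℝ)) (nhds (f a - f a)) :=
      ((hfc.tendsto.comp hcont).sub tendsto_const_nhds)
    simpa using this.mono_left nhdsWithin_le_nhds
  · have : Tendsto (fun t : ℝ => t ^ 2) (nhds (0:ℝ)) (nhds ((0:ℝ) ^ 2)) :=
      (continuous_pow 2).tendsto 0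
    simpa using this.mono_left nhdsWithin_le_nhds
  · have hslope : Tendsto (slope (deriv f) a) (nhdsWithin a {a}ᶜ) (nhds (deriv (deriv f) a)) := by
      have := h2.hasDerivAt
      rwa [hasDerivAt_iff_tendsto_slope] at this
    have h3 : Tendsto (fun t : ℝ => deriv f (a + t) / t) (nhdsWithin 0 {(0:ℝ)}ᶜ)
        (nhds (deriv (deriv f) a)) := by
      have := hslope.comp hmap
      refine this.congr fun t => ?_
      simp [slope_def_field, h0]
    have h4 := h3.div_const 2
    refine h4.congr' ?_
    filter_upwards [self_mem_nhdsWithin] with t ht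
    have ht' : (t:ℝ) ≠ 0 := by simpa using ht
    have e1 : deriv (fun t : ℝ => f (a + t) - f a) t = deriv f (a + t) := by
      rw [deriv_sub_const, deriv_comp_const_add]
    have e2 : deriv (fun t : ℝ => t ^ 2) t = 2 * t := by simp [deriv_pow]
    rw [e1, e2, div_div, mul_comm t 2]

set_option maxHeartbeats 1000000 in
/-- Laplace-type concentration around the maximizer: for `f` C², strictly concave on
`[a₁,a₂]` with unique interior maximizer `a*` and `f''(a*) < 0`, and each fixed `R > 0`,
`Σ_{|n| ≤ R L^{1/4}} exp(√L f(a* + n/√L)) ~ L^{1/4} e^{f(a*)√L} ∫_{-R}^R e^{f''(a*)x²/2} dx`. -/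
theorem laplace_sum_concentration
    (a₁ a₂ astar R : ℝ) (hR : 0 < R)
    (f : ℝ → ℝ)
    (hf : ContDiffOn ℝ 2 f (Icc a₁ a₂))
    (hconc : StrictConcaveOn ℝ (Icc a₁ a₂) f)
    (hastar : astar ∈ Ioo a₁ a₂)
    (hmax : ∀ x ∈ Icc a₁ a₂, x ≠ astar → f x < f astar)
    (hf'' : deriv (deriv f) astar < 0) :
    Tendsto (fun L : ℕ =>
      (∑ n ∈ Finset.Icc (-(⌊R * (L : ℝ) ^ ((1:ℝ)/4)⌋)) ⌊R * (L : ℝ) ^ ((1:ℝ)/4)⌋,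
        Real.exp (Real.sqrt L * f (astar + (n : ℝ) / Real.sqrt L))) /
      ((L : ℝ) ^ ((1:ℝ)/4) * Real.exp (f astar * Real.sqrt L) *
        ∫ x in (-R)..R, Real.exp (deriv (deriv f) astar * x ^ 2 / 2)))
      atTop (nhds 1) := by
  obtain ⟨ha1, ha2⟩ := hastar
  have hIoo : ContDiffOn ℝ 2 f (Ioo a₁ a₂) := hf.mono Ioo_subset_Icc_self
  have hmemIoo : Ioo a₁ a₂ ∈ nhds astar := isOpen_Ioo.mem_nhds ⟨ha1, ha2⟩
  have h1 : ∀ᶠ x in nhds astar, DifferentiableAt ℝ f x := by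
    filter_upwards [hmemIoo] with x hx
    exact (hIoo.differentiableOn (by norm_num)).differentiableAt (isOpen_Ioo.mem_nhds hx)
  have hd1 : ContDiffOn ℝ 1 (deriv f) (Ioo a₁ a₂) :=
    hIoo.deriv_of_isOpen isOpen_Ioo (by norm_num)
  have h2 : DifferentiableAt ℝ (deriv f) astar :=
    (hd1.differentiableOn (by norm_num)).differentiableAt hmemIoo
  have h0 : deriv f astar = 0 := by
    have hloc : IsLocalMax f astar := by
      filter_upwards [Icc_mem_nhds ha1 ha2] with x hx
      by_cases hxe : x = astar
      · simp [hxe]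
      · exact (hmax x hx hxe).le
    exact hloc.deriv_eq_zero
  have htay := taylor_quot h1 h2 h0
  set c := deriv (deriv f) astar with hcdef
  set I := ∫ x in (-R)..R, Real.exp (c * x ^ 2 / 2) with hIdef
  have hIpos : 0 < I := by
    apply intervalIntegral.intervalIntegral_pos_of_pos
    · exact Continuous.intervalIntegrable (by continuity) _ _
    · intro x; exact Real.exp_pos _
    · linarith
  -- dominated convergence
  have hDCT : Tendsto (fun L => ∫ x, FF f astar R L x) atTop
      (nhds (∫ x, (Ioo (-R) R).indicator (fun x => Real.exp (c * x ^ 2 / 2)) x)) := by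
    apply tendsto_integral_filter_of_dominated_convergence
      ((Icc (-(R+1)) (R+1)).indicator (fun _ => (1:ℝ)))
    · exact Eventually.of_forall fun L => FF_meas f astar R L
    · -- bound
      set δ := min (astar - a₁) (a₂ - astar) with hδdef
      have hδ : 0 < δ := lt_min (by linarith) (by linarith)
      filter_upwards [eventually_ge_atTop 1, MM_top.eventually_ge_atTop (R/δ)] with L hL hLδ
      refine ae_of_all _ fun x => ?_
      rw [FF_eval f astar R hL x]
      split_ifs with h
      · obtain ⟨hn1, hn2⟩ := Finset.mem_Icc.1 h
        have hM := MM_pos hL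
        have hM1 := MM_one_le hL
        set n := ⌊x * MM L⌋ with hndef
        have hNle : (⌊R * MM L⌋:ℝ) ≤ R * MM L := Int.floor_le _
        have hn1' : -(R * MM L) ≤ (n:ℝ) := by
          have : ((-⌊R * MM L⌋ : ℤ):ℝ) ≤ (n:ℝ) := by exact_mod_cast hn1
          push_cast at this; linarith
        have hn2' : (n:ℝ) ≤ R * MM L := by
          have : (n:ℝ) ≤ ((⌊R * MM L⌋:ℤ):ℝ) := by exact_mod_cast hn2
          linarith
        have hsq : Real.sqrt L = MM L ^ 2 := (MM_sq L).symm
        have hsqpos : 0 < Real.sqrt L := by rw [hsq]; positivity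
        have hRδ : R / MM L ≤ δ := by
          rw [div_le_iff₀ hM]
          have h2 := mul_le_mul_of_nonneg_left hLδ hδ.le
          rw [mul_div_cancel₀ _ hδ.ne'] at h2
          nlinarith
        have hdist : |(n:ℝ) / Real.sqrt L| ≤ δ := by
          refine le_trans ?_ hRδ
          rw [abs_div, abs_of_pos hsqpos, div_le_div_iff₀ hsqpos hM, hsq]
          have habs : |(n:ℝ)| ≤ R * MM L := abs_le.2 ⟨by linarith, hn2'⟩
          nlinarith [abs_nonneg ((n:ℝ))]
        obtain ⟨hd1', hd2'⟩ := abs_le.1 hdist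
        have hpt : astar + (n:ℝ) / Real.sqrt L ∈ Icc a₁ a₂ := by
          have e1 : δ ≤ astar - a₁ := min_le_left _ _
          have e2 : δ ≤ a₂ - astar := min_le_right _ _
          constructor <;> [linarith; linarith]
        have hfle : f (astar + (n:ℝ) / Real.sqrt L) - f astar ≤ 0 := by
          by_cases he : astar + (n:ℝ) / Real.sqrt L = astar
          · rw [he]; simp
          · linarith [hmax _ hpt he]
        have hA1 : AA f astar L n ≤ 1 := by
          rw [AA, Real.exp_le_one_iff]
          exact mul_nonpos_iff.2 (Or.inl ⟨hsqpos.le, hfle⟩)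
        have hfl1 : ((n:ℤ):ℝ) ≤ x * MM L := Int.floor_le _
        have hfl2 : x * MM L < (n:ℝ) + 1 := Int.lt_floor_add_one _
        have hxmem : x ∈ Icc (-(R+1)) (R+1) := by
          constructor
          · nlinarith
          · nlinarith
        rw [Set.indicator_of_mem hxmem, Real.norm_eq_abs, abs_of_pos (show (0:ℝ) < AA f astar L n by rw [AA]; exact Real.exp_pos _)]
        exact hA1
      · rw [norm_zero]
        exact Set.indicator_nonneg (fun _ _ => zero_le_one) x
    · rw [integrable_indicator_iff measurableSet_Icc]
      exact integrableOn_const measure_Icc_lt_top.ne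
    · -- pointwise limit
      have hs : volume ({0, R, -R} : Set ℝ) = 0 :=
        (Set.toFinite _).measure_zero volume
      filter_upwards [measure_eq_zero_iff_ae_notMem.mp hs] with x hx
      simp only [Set.mem_insert_iff, Set.mem_singleton_iff, not_or] at hx
      obtain ⟨hx0, hxR, hxR'⟩ := hx
      by_cases hlt : |x| < R
      · -- |x| < R : converges to exp (c x^2 / 2)
        have hmem : x ∈ Ioo (-R) R := abs_lt.1 hlt
        rw [Set.indicator_of_mem hmem]
        have hηpos : 0 < R - |x| := by linarith
        have hev : ∀ᶠ L in atTop, FF f astar R L x = AA f astar L ⌊x * MM L⌋ ∧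
            ⌊x * MM L⌋ ≠ 0 := by
          filter_upwards [eventually_ge_atTop 1, MM_top.eventually_ge_atTop (2/(R - |x|)),
            MM_top.eventually_ge_atTop (1/|x|)] with L hL hη2 hx1
          have hM := MM_pos hL
          have h2η : 2 ≤ MM L * (R - |x|) := by
            have := mul_le_mul_of_nonneg_right hη2 hηpos.le
            rwa [div_mul_cancel₀ _ hηpos.ne'] at this
          refine ⟨?_, ?_⟩
          · rw [FF_eval f astar R hL x, if_pos]
            rw [Finset.mem_Icc]
            constructor
            · have hgoal : (-(⌊R * MM L⌋:ℝ)) ≤ (⌊x * MM L⌋:ℝ) := by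
                nlinarith [Int.sub_one_lt_floor (x * MM L), Int.sub_one_lt_floor (R * MM L),
                  mul_nonneg (by linarith [neg_abs_le x] : (0:ℝ) ≤ x + |x|) hM.le]
              exact_mod_cast hgoal
            · refine Int.floor_le_floor ?_
              have hxR2 : x ≤ R := (le_abs_self x).trans hlt.le
              exact mul_le_mul_of_nonneg_right hxR2 hM.le
          · rcases Ne.lt_or_gt hx0 with hneg | hpos
            · exact (Int.floor_lt.2 (by simpa using mul_neg_of_neg_of_pos hneg hM)).ne
            · refine (lt_of_lt_of_le zero_lt_one (Int.le_floor.2 ?_)).ne'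
              push_cast
              have := mul_le_mul_of_nonneg_right hx1 (abs_nonneg x)
              rw [div_mul_cancel₀ _ (abs_ne_zero.2 hx0), abs_of_pos hpos] at this
              linarith [mul_comm x (MM L), this]
        have key1 : ∀ {m s : ℝ} (nn : ℝ), 0 < m → m ^ 2 = s →
            nn / m * m⁻¹ = nn / s := by
          intro m s nn hm hs
          subst hs
          rw [← div_eq_mul_inv, div_div, ← pow_two]
        have key2 : ∀ {m s : ℝ} (nn Δ : ℝ), 0 < m → m ^ 2 = s → nn ≠ 0 →
            Δ / (nn / s) ^ 2 * (nn / m) ^ 2 = s * Δ := by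
          intro m s nn Δ hm hs hn
          subst hs
          have hm' : m ≠ 0 := hm.ne'
          field_simp
        have hu_t : Tendsto (fun L : ℕ => (⌊x * MM L⌋:ℝ) / MM L) atTop (nhds x) :=
          floor_div_tendsto x
        have ht0 : Tendsto (fun L : ℕ => (⌊x * MM L⌋:ℝ) / Real.sqrt L) atTop (nhds 0) := by
          have h' := hu_t.mul MM_top.inv_tendsto_atTop
          rw [mul_zero] at h'
          refine h'.congr' ?_
          filter_upwards [eventually_ge_atTop 1] with L hL
          exact key1 _ (MM_pos hL) (MM_sq L)
        have htne : ∀ᶠ L in atTop, (⌊x * MM L⌋:ℝ) / Real.sqrt L ≠ 0 := by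
          filter_upwards [hev, eventually_ge_atTop 1] with L h hL
          have hsp : (0:ℝ) < Real.sqrt L := by
            rw [← MM_sq L]
            exact pow_pos (MM_pos hL) 2
          exact div_ne_zero (Int.cast_ne_zero.2 h.2) hsp.ne'
        have htt : Tendsto (fun L : ℕ => (⌊x * MM L⌋:ℝ) / Real.sqrt L) atTop
            (nhdsWithin 0 {(0:ℝ)}ᶜ) := by
          rw [tendsto_nhdsWithin_iff]
          exact ⟨ht0, htne.mono fun L h => h⟩
        have hq := htay.comp htt
        have hu2 : Tendsto (fun L : ℕ => ((⌊x * MM L⌋:ℝ) / MM L) ^ 2) atTop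
            (nhds (x ^ 2)) := hu_t.pow 2
        have hprod := hq.mul hu2
        have hexp : Tendsto (fun L : ℕ =>
            Real.exp ((f (astar + (⌊x * MM L⌋:ℝ) / Real.sqrt L) - f astar) /
              ((⌊x * MM L⌋:ℝ) / Real.sqrt L) ^ 2 * ((⌊x * MM L⌋:ℝ) / MM L) ^ 2)) atTop
            (nhds (Real.exp (c / 2 * x ^ 2))) :=
          (Real.continuous_exp.tendsto _).comp hprod
        have hcx : c / 2 * x ^ 2 = c * x ^ 2 / 2 := by ring
        rw [hcx] at hexp
        refine Tendsto.congr' ?_ hexp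
        filter_upwards [hev, eventually_ge_atTop 1] with L h hL
        rw [h.1, AA]
        congr 1
        exact key2 _ _ (MM_pos hL) (MM_sq L) (Int.cast_ne_zero.2 h.2)
      · -- |x| > R : converges to 0
        have hgt : R < |x| := by
          refine lt_of_le_of_ne (not_lt.1 hlt) fun h => ?_
          rcases (abs_eq hR.le).1 h.symm with h' | h'
          · exact hxR h'
          · exact hxR' h'
        have hnmem : x ∉ Ioo (-R) R := fun hm => hlt (abs_lt.2 ⟨hm.1, hm.2⟩)
        rw [Set.indicator_of_notMem hnmem]
        have hev0 : ∀ᶠ L in atTop, FF f astar R L x = 0 := by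
          filter_upwards [eventually_ge_atTop 1,
            MM_top.eventually_ge_atTop (1/(|x| - R))] with L hL hLb
          have hM := MM_pos hL
          have h1m : 1 ≤ MM L * (|x| - R) := by
            have := mul_le_mul_of_nonneg_right hLb (by linarith : (0:ℝ) ≤ |x| - R)
            rwa [div_mul_cancel₀ _ (by linarith : |x| - R ≠ 0)] at this
          rw [FF_eval f astar R hL x, if_neg]
          rw [Finset.mem_Icc]
          push_neg
          intro hlow
          rcases lt_abs.1 hgt with hpos | hneg
          · -- x > R
            have hgoal : (⌊R * MM L⌋:ℝ) < (⌊x * MM L⌋:ℝ) := by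
              have hax : |x| = x := abs_of_pos (by linarith)
              rw [hax] at h1m
              nlinarith [Int.floor_le (R * MM L), Int.sub_one_lt_floor (x * MM L)]
            exact_mod_cast hgoal
          · -- x < -R
            exfalso
            have hgoal : (⌊x * MM L⌋:ℝ) < (-(⌊R * MM L⌋:ℝ)) := by
              have hax : |x| = -x := abs_of_neg (by linarith)
              rw [hax] at h1m
              nlinarith [Int.floor_le (x * MM L), Int.floor_le (R * MM L)]
            have : ¬ (-(⌊R * MM L⌋) ≤ ⌊x * MM L⌋) := by
              push_neg
              exact_mod_cast hgoal
            exact this hlow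
        exact tendsto_const_nhds.congr' (hev0.mono fun L h => h.symm)
  have hgI : (∫ x, (Ioo (-R) R).indicator (fun x => Real.exp (c * x ^ 2 / 2)) x) = I := by
    rw [integral_indicator measurableSet_Ioo, hIdef,
      intervalIntegral.integral_of_le (by linarith : -R ≤ R), integral_Ioc_eq_integral_Ioo]
  rw [hgI] at hDCT
  have hkey : Tendsto (fun L => (∫ x, FF f astar R L x) / I) atTop (nhds 1) := by
    simpa [div_self hIpos.ne'] using hDCT.div_const I
  refine hkey.congr' ?_
  filter_upwards [eventually_ge_atTop 1] with L hL
  have hMM : MM L = (L:ℝ) ^ ((1:ℝ)/4) := rfl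
  rw [FF_integral f astar R hL, ← hMM]
  have hsum : (∑ n ∈ Finset.Icc (-(⌊R * MM L⌋)) ⌊R * MM L⌋,
      Real.exp (Real.sqrt L * f (astar + (n:ℝ) / Real.sqrt L)))
      = Real.exp (f astar * Real.sqrt L) *
        ∑ n ∈ Finset.Icc (-(⌊R * MM L⌋)) ⌊R * MM L⌋, AA f astar L n := by
    rw [Finset.mul_sum]
    refine Finset.sum_congr rfl fun n _ => ?_
    rw [AA, ← Real.exp_add]
    ring_nf
  rw [hsum]
  have hE := Real.exp_ne_zero (f astar * Real.sqrt L)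
  have hM := (MM_pos hL).ne'
  field_simp
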